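/- Let f : ℝⁿ × ℝᵐ → ℝ be twice continuously differentiable with ∇f Lipschitz with constant L, and let 0 < α < 1/(2L). Let (x*,y*) be a critical point of f that is GDA-stable, i.e., the spectral radius of the Jacobian J_GDA = I + αH(x*,y*) of the GDA map at (x*,y*) is at most 1. Then the spectral radius of the Jacobian of the OGDA map at the fixed point (x*,y*,x*,y*) is at most 1, i.e., (x*,y*,x*,y*) is OGDA-stable. -/

import Mathlib

open Filter Topology MeasureTheory Matrix

noncomputable section

abbrev Euc (n : ℕ) : Type := EuclideanSpace ℝ (Fin n)

/-- Partial gradient of `f` with respect to the first (`x`) variable. -/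
noncomputable def gradX {n m : ℕ} (f : Euc n × Euc m → ℝ) (p : Euc n × Euc m) : Euc n :=
  gradient (fun x => f (x, p.2)) p.1

/-- Partial gradient of `f` with respect to the second (`y`) variable. -/
noncomputable def gradY {n m : ℕ} (f : Euc n × Euc m → ℝ) (p : Euc n × Euc m) : Euc m :=
  gradient (fun y => f (p.1, y)) p.2

/-- The GDA (gradient descent/ascent) update map with step size `α`:
`h(x,y) = (x - α ∇ₓ f(x,y), y + α ∇ᵧ f(x,y))`. -/
noncomputable def gda {n m : ℕ} (f : Euc n × Euc m → ℝ) (α : ℝ) (p : Euc n × Euc m) :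
    Euc n × Euc m :=
  (p.1 - α • gradX f p, p.2 + α • gradY f p)

/-- The standard basis vectors of `ℝⁿ × ℝᵐ`. -/
noncomputable def bVec (n m : ℕ) : Fin n ⊕ Fin m → Euc n × Euc m
  | Sum.inl i => (EuclideanSpace.single i 1, 0)
  | Sum.inr j => (0, EuclideanSpace.single j 1)

/-- Second directional derivative of `f` at `p` in directions `u, v`. -/
noncomputable def dD {n m : ℕ} (f : Euc n × Euc m → ℝ) (p u v : Euc n × Euc m) : ℝ :=
  fderiv ℝ (fun q => fderiv ℝ f q v) p u

/-- The matrix `H = [[-∇²ₓₓ f, -∇²ₓᵧ f], [∇²ᵧₓ f, ∇²ᵧᵧ f]]` of `f` at `p`. -/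
noncomputable def Hmat {n m : ℕ} (f : Euc n × Euc m → ℝ) (p : Euc n × Euc m) :
    Matrix (Fin n ⊕ Fin m) (Fin n ⊕ Fin m) ℝ :=
  Matrix.of fun i j =>
    (Sum.elim (fun _ => (-1 : ℝ)) (fun _ => (1 : ℝ)) i) * dD f p (bVec n m i) (bVec n m j)

/-- The set of complex eigenvalues of a real square matrix. -/
noncomputable def specC {ι : Type} [Fintype ι] [DecidableEq ι] (M : Matrix ι ι ℝ) : Set ℂ :=
  spectrum ℂ (M.map (Complex.ofReal))

/-- The Jacobian `I + αH` of the GDA update map at `p`. -/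
noncomputable def Jgda {n m : ℕ} (f : Euc n × Euc m → ℝ) (α : ℝ) (p : Euc n × Euc m) :
    Matrix (Fin n ⊕ Fin m) (Fin n ⊕ Fin m) ℝ :=
  1 + α • Hmat f p

/-- The OGDA (optimistic gradient descent/ascent) update map with step size `α`,
acting on pairs `((x_t, y_t), (x_{t-1}, y_{t-1}))`. -/
noncomputable def ogda {n m : ℕ} (f : Euc n × Euc m → ℝ) (α : ℝ)
    (q : (Euc n × Euc m) × (Euc n × Euc m)) : (Euc n × Euc m) × (Euc n × Euc m) :=
  ((q.1.1 - (2 * α) • gradX f q.1 + α • gradX f q.2,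
    q.1.2 + (2 * α) • gradY f q.1 - α • gradY f q.2), q.1)

/-- The full Hessian matrix `∇²f` of `f` at `p`. -/
noncomputable def hessMat {n m : ℕ} (f : Euc n × Euc m → ℝ) (p : Euc n × Euc m) :
    Matrix (Fin n ⊕ Fin m) (Fin n ⊕ Fin m) ℝ :=
  Matrix.of fun i j => dD f p (bVec n m i) (bVec n m j)

/-- The Jacobian of the OGDA update map at a fixed point `(p, p)`, in block form
`[[I + 2αH, -αH], [I, 0]]` where `H = H(p)`. -/
noncomputable def Jogda {n m : ℕ} (f : Euc n × Euc m → ℝ) (α : ℝ) (p : Euc n × Euc m) :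
    Matrix ((Fin n ⊕ Fin m) ⊕ (Fin n ⊕ Fin m)) ((Fin n ⊕ Fin m) ⊕ (Fin n ⊕ Fin m)) ℝ :=
  Matrix.fromBlocks (1 + (2 * α) • Hmat f p) ((-α) • Hmat f p) 1 0

set_option maxHeartbeats 1000000

-- ==== auxiliary ====

/-- expansion of a continuous linear functional on EuclideanSpace -/
lemma clm_expand {n : ℕ} (ψ : Euc n →L[ℝ] ℝ) (a : Euc n) :
    ψ a = ∑ k, a k * ψ (EuclideanSpace.single k 1) := by
  conv_lhs => rw [← (EuclideanSpace.basisFun (Fin n) ℝ).sum_repr a]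
  rw [map_sum]
  congr 1
  ext k
  rw [_root_.map_smul, EuclideanSpace.basisFun_repr, EuclideanSpace.basisFun_apply]
  simp [smul_eq_mul]

noncomputable def blockL {n m : ℕ} (w : Fin n ⊕ Fin m → ℝ) : Euc n :=
  (WithLp.equiv 2 (Fin n → ℝ)).symm (fun k => w (Sum.inl k))

noncomputable def blockR {n m : ℕ} (w : Fin n ⊕ Fin m → ℝ) : Euc m :=
  (WithLp.equiv 2 (Fin m → ℝ)).symm (fun k => w (Sum.inr k))

noncomputable def Nmax {n m : ℕ} (w : Fin n ⊕ Fin m → ℝ) : ℝ :=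
  max ‖blockL (n := n) (m := m) w‖ ‖blockR (n := n) (m := m) w‖

lemma Nmax_nonneg {n m : ℕ} (w : Fin n ⊕ Fin m → ℝ) : 0 ≤ Nmax w :=
  le_trans (norm_nonneg _) (le_max_left _ _)

lemma coord_le_norm {n : ℕ} (a : Euc n) (k : Fin n) : |a k| ≤ ‖a‖ := by
  rw [EuclideanSpace.norm_eq, ← Real.sqrt_sq_eq_abs]
  apply Real.sqrt_le_sqrt
  have : |a k| ^ 2 = ‖a k‖ ^ 2 := by rw [Real.norm_eq_abs]
  calc a k ^ 2 = ‖a k‖ ^ 2 := by rw [Real.norm_eq_abs, sq_abs]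
    _ ≤ ∑ i, ‖a i‖ ^ 2 :=
      Finset.single_le_sum (f := fun i => ‖a i‖ ^ 2) (fun i _ => sq_nonneg _) (Finset.mem_univ k)

lemma abs_le_Nmax {n m : ℕ} (w : Fin n ⊕ Fin m → ℝ) (i : Fin n ⊕ Fin m) :
    |w i| ≤ Nmax w := by
  cases i with
  | inl k => exact le_trans (coord_le_norm (blockL w) k) (le_max_left _ _)
  | inr k => exact le_trans (coord_le_norm (blockR w) k) (le_max_right _ _)

/-- a functional applied to the recombined vector equals the coordinate expansion -/
lemma clm_expand_prod {n m : ℕ} (φ : (Euc n × Euc m) →L[ℝ] ℝ) (w : Fin n ⊕ Fin m → ℝ) :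
    φ (blockL w, blockR w) = ∑ j, w j * φ (bVec n m j) := by
  have hsplit : ((blockL w, blockR w) : Euc n × Euc m)
      = (blockL w, 0) + (0, blockR w) := by simp
  rw [hsplit, map_add, Fintype.sum_sum_type]
  congr 1
  · have : φ.comp (ContinuousLinearMap.inl ℝ (Euc n) (Euc m)) (blockL w)
        = φ (blockL w, 0) := rfl
    rw [← this, clm_expand]
    rfl
  · have : φ.comp (ContinuousLinearMap.inr ℝ (Euc n) (Euc m)) (blockR w)
        = φ (0, blockR w) := rfl
    rw [← this, clm_expand]
    rfl

/-- The key analytic bound: one application of `Hmat` contracts `Nmax` by factor `L`. -/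
lemma hmat_bound {n m : ℕ} (f : Euc n × Euc m → ℝ) (L : ℝ) (hL0 : 0 ≤ L)
    (hf : ContDiff ℝ 2 f)
    (hL : LipschitzWith (Real.toNNReal L) (fun p => (gradX f p, gradY f p)))
    (p : Euc n × Euc m) (w : Fin n ⊕ Fin m → ℝ) :
    Nmax (Hmat f p *ᵥ w) ≤ L * Nmax w := by
  classical
  have hdf : Differentiable ℝ f := hf.differentiable two_ne_zero
  set f' : (Euc n × Euc m) → ((Euc n × Euc m) →L[ℝ] ℝ) := fderiv ℝ f with hf'def
  have hf1 : ContDiff ℝ 1 f' := hf.fderiv_right (le_refl 2)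
  have hdf' : Differentiable ℝ f' := hf1.differentiable one_ne_zero
  set D2 : (Euc n × Euc m) →L[ℝ] ((Euc n × Euc m) →L[ℝ] ℝ) := fderiv ℝ f' p with hD2def
  have hD2 : HasFDerivAt f' D2 p := (hdf' p).hasFDerivAt
  have hsym : ∀ u v, D2 u v = D2 v u :=
    second_derivative_symmetric (fun y => (hdf y).hasFDerivAt) hD2
  have hdD : ∀ u v, dD f p u v = D2 u v := by
    intro u v
    have h1 : HasFDerivAt (fun q => f' q v)
        ((ContinuousLinearMap.apply ℝ ℝ v).comp D2) p :=
      (ContinuousLinearMap.apply ℝ ℝ v).hasFDerivAt.comp p hD2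
    rw [dD, h1.fderiv]
    rfl
  -- the continuous linear map A : dual → (Euc n × Euc m)  turning a functional into its "gradient pair"
  set inlC := ContinuousLinearMap.inl ℝ (Euc n) (Euc m) with hinlC
  set inrC := ContinuousLinearMap.inr ℝ (Euc n) (Euc m) with hinrC
  set An : ((Euc n × Euc m) →L[ℝ] ℝ) →L[ℝ] Euc n :=
    LinearMap.toContinuousLinearMap
      { toFun := fun φ => (InnerProductSpace.toDual ℝ (Euc n)).symm (φ.comp inlC)
        map_add' := by intros; simp [ContinuousLinearMap.add_comp]
        map_smul' := by
          intros c φ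
          simp [ContinuousLinearMap.smul_comp, LinearIsometryEquiv.map_smulₛₗ,
            starRingEnd_apply, star_trivial] } with hAn
  set Am : ((Euc n × Euc m) →L[ℝ] ℝ) →L[ℝ] Euc m :=
    LinearMap.toContinuousLinearMap
      { toFun := fun φ => (InnerProductSpace.toDual ℝ (Euc m)).symm (φ.comp inrC)
        map_add' := by intros; simp [ContinuousLinearMap.add_comp]
        map_smul' := by
          intros c φ
          simp [ContinuousLinearMap.smul_comp, LinearIsometryEquiv.map_smulₛₗ,
            starRingEnd_apply, star_trivial] } with hAm
  set A : ((Euc n × Euc m) →L[ℝ] ℝ) →L[ℝ] (Euc n × Euc m) := An.prod Am with hA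
  have hAn_apply : ∀ φ : (Euc n × Euc m) →L[ℝ] ℝ, An φ = (InnerProductSpace.toDual ℝ (Euc n)).symm (φ.comp inlC) := by
    intro φ; rfl
  have hAm_apply : ∀ φ : (Euc n × Euc m) →L[ℝ] ℝ, Am φ = (InnerProductSpace.toDual ℝ (Euc m)).symm (φ.comp inrC) := by
    intro φ; rfl
  -- G = A ∘ f'
  have hGA : (fun q => (gradX f q, gradY f q)) = fun q => A (f' q) := by
    funext q
    have hX : gradX f q = An (f' q) := by
      rw [hAn_apply, gradX, gradient]
      congr 1
      have : HasFDerivAt (fun x : Euc n => f (x, q.2)) ((f' q).comp inlC) q.1 := by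
        have h2 : HasFDerivAt (fun x : Euc n => (x, q.2)) inlC q.1 :=
          hasFDerivAt_prodMk_left q.1 q.2
        have h3 : HasFDerivAt f (f' q) (q.1, q.2) := by
          rw [show ((q.1, q.2) : (Euc n × Euc m)) = q from rfl]
          exact (hdf q).hasFDerivAt
        exact h3.comp q.1 h2
      exact this.fderiv
    have hY : gradY f q = Am (f' q) := by
      rw [hAm_apply, gradY, gradient]
      congr 1
      have : HasFDerivAt (fun y : Euc m => f (q.1, y)) ((f' q).comp inrC) q.2 := by
        have h2 : HasFDerivAt (fun y : Euc m => ((q.1 : Euc n), y)) inrC q.2 :=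
          hasFDerivAt_prodMk_right q.1 q.2
        have h3 : HasFDerivAt f (f' q) (q.1, q.2) := by
          rw [show ((q.1, q.2) : (Euc n × Euc m)) = q from rfl]
          exact (hdf q).hasFDerivAt
        exact h3.comp q.2 h2
      exact this.fderiv
    rw [hA]; ext <;> simp [hX, hY]
  set T : (Euc n × Euc m) →L[ℝ] (Euc n × Euc m) := A.comp D2 with hT
  have hTd : HasFDerivAt (fun q => (gradX f q, gradY f q)) T p := by
    rw [hGA]
    exact A.hasFDerivAt.comp p hD2
  have hTnorm : ‖T‖ ≤ L := by
    have := hTd.le_of_lipschitz hL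
    rwa [Real.coe_toNNReal L hL0] at this
  -- coordinates of T w̃
  set wt : (Euc n × Euc m) := (blockL w, blockR w) with hwt
  have hTw1 : ∀ k : Fin n, (T wt).1 k = D2 wt (bVec n m (Sum.inl k)) := by
    intro k
    have h1 : (T wt).1 = An (D2 wt) := rfl
    rw [h1, hAn_apply]
    have h2 : ((InnerProductSpace.toDual ℝ (Euc n)).symm ((D2 wt).comp inlC)) k
        = (inner ℝ ((InnerProductSpace.toDual ℝ (Euc n)).symm ((D2 wt).comp inlC))
            (EuclideanSpace.single k 1) : ℝ) := by
      rw [EuclideanSpace.inner_single_right]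
      simp
    rw [h2, InnerProductSpace.toDual_symm_apply]
    rfl
  have hTw2 : ∀ k : Fin m, (T wt).2 k = D2 wt (bVec n m (Sum.inr k)) := by
    intro k
    have h1 : (T wt).2 = Am (D2 wt) := rfl
    rw [h1, hAm_apply]
    have h2 : ((InnerProductSpace.toDual ℝ (Euc m)).symm ((D2 wt).comp inrC)) k
        = (inner ℝ ((InnerProductSpace.toDual ℝ (Euc m)).symm ((D2 wt).comp inrC))
            (EuclideanSpace.single k 1) : ℝ) := by
      rw [EuclideanSpace.inner_single_right]
      simp
    rw [h2, InnerProductSpace.toDual_symm_apply]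
    rfl
  -- mulVec coordinates
  have hcoord : ∀ i, (Hmat f p *ᵥ w) i
      = (Sum.elim (fun _ => (-1:ℝ)) (fun _ => (1:ℝ)) i) * D2 wt (bVec n m i) := by
    intro i
    have : (Hmat f p *ᵥ w) i
        = (Sum.elim (fun _ => (-1:ℝ)) (fun _ => (1:ℝ)) i) * ∑ j, w j * D2 (bVec n m i) (bVec n m j) := by
      rw [Matrix.mulVec, dotProduct, Finset.mul_sum]
      congr 1; ext j
      rw [Hmat, Matrix.of_apply, hdD]
      ring
    rw [this]
    congr 1
    have hφ : ∀ j, D2 (bVec n m i) (bVec n m j) = D2 (bVec n m j) (bVec n m i) := fun j => hsym _ _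
    calc ∑ j, w j * D2 (bVec n m i) (bVec n m j)
        = ∑ j, w j * (D2.flip (bVec n m i)) (bVec n m j) := by
          congr 1; ext j; rw [hφ]; rfl
      _ = (D2.flip (bVec n m i)) wt := by rw [clm_expand_prod]
      _ = D2 wt (bVec n m i) := rfl
  -- now the norm bound
  have hblockL : blockL (Hmat f p *ᵥ w) = -(T wt).1 := by
    ext k
    have := hcoord (Sum.inl k)
    simp only [Sum.elim_inl] at this
    rw [show blockL (Hmat f p *ᵥ w) k = (Hmat f p *ᵥ w) (Sum.inl k) from rfl, this,
      show ((-(T wt).1) k : ℝ) = -((T wt).1 k) from rfl, hTw1 k]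
    ring
  have hblockR : blockR (Hmat f p *ᵥ w) = (T wt).2 := by
    ext k
    have := hcoord (Sum.inr k)
    simp only [Sum.elim_inr] at this
    rw [show blockR (Hmat f p *ᵥ w) k = (Hmat f p *ᵥ w) (Sum.inr k) from rfl, this, hTw2 k]
    ring
  have hNwt : ‖wt‖ = Nmax w := by
    rw [Prod.norm_def]; rfl
  calc Nmax (Hmat f p *ᵥ w) = max ‖-(T wt).1‖ ‖(T wt).2‖ := by rw [Nmax, hblockL, hblockR]
    _ = max ‖(T wt).1‖ ‖(T wt).2‖ := by rw [norm_neg]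
    _ = ‖T wt‖ := (Prod.norm_def _).symm
    _ ≤ ‖T‖ * ‖wt‖ := T.le_opNorm wt
    _ ≤ L * Nmax w := by
        rw [hNwt]
        exact mul_le_mul_of_nonneg_right hTnorm (hNwt ▸ norm_nonneg wt) |>.trans
          (mul_le_mul_of_nonneg_left le_rfl hL0)

lemma hmat_pow_bound {n m : ℕ} (f : Euc n × Euc m → ℝ) (L : ℝ) (hL0 : 0 ≤ L)
    (hf : ContDiff ℝ 2 f)
    (hL : LipschitzWith (Real.toNNReal L) (fun p => (gradX f p, gradY f p)))
    (p : Euc n × Euc m) (w : Fin n ⊕ Fin m → ℝ) (k : ℕ) :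
    Nmax ((Hmat f p ^ k) *ᵥ w) ≤ L ^ k * Nmax w := by
  induction k with
  | zero => simp [Matrix.one_mulVec]
  | succ k ih =>
      have h1 : (Hmat f p ^ (k+1)) *ᵥ w = Hmat f p *ᵥ ((Hmat f p ^ k) *ᵥ w) := by
        rw [Matrix.mulVec_mulVec, ← pow_succ']
      rw [h1]
      calc Nmax (Hmat f p *ᵥ ((Hmat f p ^ k) *ᵥ w))
          ≤ L * Nmax ((Hmat f p ^ k) *ᵥ w) := hmat_bound f L hL0 hf hL p _
        _ ≤ L * (L ^ k * Nmax w) := mul_le_mul_of_nonneg_left ih hL0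
        _ = L ^ (k+1) * Nmax w := by ring

/-- eigenvalues of the complexified `Hmat` are bounded by the Lipschitz constant. -/
lemma eig_bound {n m : ℕ} (f : Euc n × Euc m → ℝ) (L : ℝ) (hL0 : 0 ≤ L)
    (hf : ContDiff ℝ 2 f)
    (hL : LipschitzWith (Real.toNNReal L) (fun p => (gradX f p, gradY f p)))
    (p : Euc n × Euc m) (lam : ℂ) (v : Fin n ⊕ Fin m → ℂ) (hv : v ≠ 0)
    (heig : ((Hmat f p).map Complex.ofReal) *ᵥ v = lam • v) : ‖lam‖ ≤ L := by
  classical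
  by_contra hgt
  push_neg at hgt
  have hlam0 : 0 < ‖lam‖ := lt_of_le_of_lt hL0 hgt
  -- powers
  have hpow : ∀ k : ℕ, (((Hmat f p) ^ k).map Complex.ofReal) *ᵥ v = (lam ^ k) • v := by
    intro k
    induction k with
    | zero => simp [Matrix.one_mulVec]
    | succ k ih =>
        have hmap : ((Hmat f p) ^ (k+1)).map Complex.ofReal
            = ((Hmat f p).map Complex.ofReal) * (((Hmat f p) ^ k).map Complex.ofReal) := by
          have h1 : ∀ j : ℕ, ((Hmat f p) ^ j).map Complex.ofReal
              = ((Hmat f p).map Complex.ofReal) ^ j := by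
            intro j
            have := map_pow (Complex.ofRealHom.mapMatrix) (Hmat f p) j
            simp only [RingHom.mapMatrix_apply] at this
            exact this
          rw [h1, h1, pow_succ']
        rw [hmap, ← Matrix.mulVec_mulVec, ih, Matrix.mulVec_smul, heig, smul_smul, ← pow_succ]
  -- real and imaginary parts
  set va : Fin n ⊕ Fin m → ℝ := fun j => (v j).re with hva
  set vb : Fin n ⊕ Fin m → ℝ := fun j => (v j).im with hvb
  have hre : ∀ (R : Matrix (Fin n ⊕ Fin m) (Fin n ⊕ Fin m) ℝ) (i),
      ((R.map Complex.ofReal *ᵥ v) i).re = (R *ᵥ va) i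
      ∧ ((R.map Complex.ofReal *ᵥ v) i).im = (R *ᵥ vb) i := by
    intro R i
    constructor
    · rw [Matrix.mulVec, dotProduct, Complex.re_sum, Matrix.mulVec, dotProduct]
      congr 1; ext j; simp [Matrix.map_apply, hva]
    · rw [Matrix.mulVec, dotProduct, Complex.im_sum, Matrix.mulVec, dotProduct]
      congr 1; ext j; simp [Matrix.map_apply, hvb]
  obtain ⟨i0, hi0⟩ : ∃ i, v i ≠ 0 := by
    by_contra h
    push_neg at h
    exact hv (funext h)
  set C := Nmax va + Nmax vb with hC
  have hC0 : 0 ≤ C := add_nonneg (Nmax_nonneg _) (Nmax_nonneg _)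
  have hbound : ∀ k : ℕ, ‖lam‖ ^ k * ‖v i0‖ ≤ L ^ k * C := by
    intro k
    have h1 : ((lam ^ k) • v) i0 = lam ^ k * v i0 := rfl
    have h2 : ‖lam ^ k * v i0‖ = ‖lam‖ ^ k * ‖v i0‖ := by
      rw [norm_mul, norm_pow]
    have h3 : ((((Hmat f p) ^ k).map Complex.ofReal *ᵥ v) i0) = lam ^ k * v i0 := by
      rw [hpow k, h1]
    have h4 := (hre ((Hmat f p) ^ k) i0).1
    have h5 := (hre ((Hmat f p) ^ k) i0).2
    have h6 : ‖lam ^ k * v i0‖ ≤ |((Hmat f p ^ k) *ᵥ va) i0| + |((Hmat f p ^ k) *ᵥ vb) i0| := by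
      rw [← h3, ← h4, ← h5]
      exact Complex.norm_le_abs_re_add_abs_im _
    have h7 : |((Hmat f p ^ k) *ᵥ va) i0| ≤ L ^ k * Nmax va :=
      le_trans (abs_le_Nmax _ _) (hmat_pow_bound f L hL0 hf hL p va k)
    have h8 : |((Hmat f p ^ k) *ᵥ vb) i0| ≤ L ^ k * Nmax vb :=
      le_trans (abs_le_Nmax _ _) (hmat_pow_bound f L hL0 hf hL p vb k)
    rw [← h2]
    calc ‖lam ^ k * v i0‖ ≤ L ^ k * Nmax va + L ^ k * Nmax vb := by linarith
      _ = L ^ k * C := by rw [hC]; ring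
  -- contradiction
  have hvi0 : 0 < ‖v i0‖ := norm_pos_iff.2 hi0
  have hCpos : 0 < C := by
    by_contra hc
    push_neg at hc
    have := hbound 0
    simp at this
    linarith
  have hr1 : L / ‖lam‖ < 1 := (div_lt_one hlam0).2 hgt
  have hr0 : 0 ≤ L / ‖lam‖ := div_nonneg hL0 hlam0.le
  obtain ⟨k, hk⟩ := exists_pow_lt_of_lt_one (div_pos hvi0 hCpos) hr1
  have hcontr := hbound k
  have hLk : L ^ k = (L / ‖lam‖) ^ k * ‖lam‖ ^ k := by
    rw [div_pow, div_mul_cancel₀]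
    positivity
  rw [hLk] at hcontr
  have hlamk : 0 < ‖lam‖ ^ k := pow_pos hlam0 k
  have : (L / ‖lam‖) ^ k * ‖lam‖ ^ k * C < (‖v i0‖ / C) * ‖lam‖ ^ k * C := by
    have := mul_lt_mul_of_pos_right hk (mul_pos hlamk hCpos)
    calc (L / ‖lam‖) ^ k * ‖lam‖ ^ k * C = (L / ‖lam‖) ^ k * (‖lam‖ ^ k * C) := by ring
      _ < (‖v i0‖ / C) * (‖lam‖ ^ k * C) := this
      _ = (‖v i0‖ / C) * ‖lam‖ ^ k * C := by ring
  have heq2 : (‖v i0‖ / C) * ‖lam‖ ^ k * C = ‖lam‖ ^ k * ‖v i0‖ := by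
    field_simp
  rw [heq2] at this
  nlinarith [hcontr, this]


lemma key_complex {μ c : ℂ} (hr : 1 < ‖μ‖) (hc : ‖c‖ < 1/2)
    (h1 : ‖1+c‖ ≤ 1) (heq : c*(2*μ-1) = μ^2 - μ) : False := by
  set x := μ.re with hx
  set y := μ.im with hy
  have hs : 1 < x^2 + y^2 := by
    nlinarith [Complex.sq_norm μ, Complex.normSq_apply μ, norm_nonneg μ,
      hr]
  set A := 2*μ - 1 with hA
  set B := μ^2 - μ with hB
  have hnA : Complex.normSq A = (2*x-1)^2 + 4*y^2 := by
    simp [hA, Complex.normSq_apply]; ring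
  have hnB : Complex.normSq B = (x^2+y^2) * ((x-1)^2 + y^2) := by
    simp [hB, Complex.normSq_apply, Complex.sub_re, Complex.sub_im, Complex.sq_norm, pow_two]
    ring
  have hAB : ‖A + B‖ ≤ ‖A‖ := by
    have : A + B = (1+c) * A := by rw [hA, hB]; linear_combination -heq
    rw [this, norm_mul]
    nlinarith [norm_nonneg A]
  have hre : (2*x-1) * ((x^2+y^2) - x) ≤ 0 := by
    have h2 : Complex.normSq (A+B) ≤ Complex.normSq A := by
      have := mul_self_le_mul_self (norm_nonneg (A+B)) hAB
      simpa [Complex.normSq_eq_norm_sq, pow_two] using this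
    have e1 : Complex.normSq (A+B) = Complex.normSq A + Complex.normSq B
        + 2*((2*x-1) * ((x^2+y^2) - x)) := by
      simp [Complex.normSq_apply, Complex.add_re, Complex.add_im, hA, hB, pow_two,
        Complex.mul_re, Complex.mul_im]
      ring
    nlinarith [Complex.normSq_nonneg B, hnB]
  have hcB : Complex.normSq B < Complex.normSq A / 4 := by
    have hA0 : A ≠ 0 := by
      intro h0
      have hB0 : B = 0 := by rw [← heq, h0, mul_zero]
      have hμμ : μ^2 = μ := by rwa [hB, sub_eq_zero] at hB0
      have hμ : μ = 0 ∨ μ = 1 := by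
        rcases mul_eq_zero.1 (show μ * (μ - 1) = 0 by linear_combination hμμ) with h | h
        · exact Or.inl h
        · exact Or.inr (sub_eq_zero.1 h)
      rcases hμ with h | h <;> simp [h] at hr <;> linarith
    have hlt : ‖B‖ < ‖A‖/2 := by
      have hBc : ‖B‖ = ‖c‖ * ‖A‖ := by rw [← heq, norm_mul]
      rw [hBc]
      have := norm_pos_iff.2 hA0
      nlinarith
    have hb := norm_nonneg B
    have := mul_self_lt_mul_self hb hlt
    simp [Complex.normSq_eq_norm_sq, pow_two] at *
    nlinarith
  nlinarith [hnA, hnB, hs, hre, hcB, sq_nonneg (x-1), sq_nonneg y, sq_nonneg (x*y),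
    sq_nonneg ((x^2+y^2) - x)]


/-- Let `f : ℝⁿ × ℝᵐ → ℝ` be twice continuously differentiable with
`∇f` Lipschitz with constant `L` and `0 < α < 1/(2L)`.  If the critical point `(x*,y*)`
is GDA-stable (every eigenvalue of the GDA Jacobian `I + αH` has modulus at most `1`),
then `(x*,y*,x*,y*)` is OGDA-stable (every eigenvalue of the OGDA Jacobian there has
modulus at most `1`). -/
theorem gda_stable_implies_ogda_stable {n m : ℕ} (f : Euc n × Euc m → ℝ) (L α : ℝ)
    (hf : ContDiff ℝ 2 f)
    (hL : LipschitzWith (Real.toNNReal L) (fun p => (gradX f p, gradY f p)))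
    (hα : 0 < α) (hα' : α < 1 / (2 * L))
    (pstar : Euc n × Euc m) (hcrit : fderiv ℝ f pstar = 0)
    (hstable : ∀ μ ∈ specC (Jgda f α pstar), ‖μ‖ ≤ 1) :
    ∀ μ ∈ specC (Jogda f α pstar), ‖μ‖ ≤ 1 := by
  classical
  intro μ hμ
  by_contra hgt
  push_neg at hgt
  -- L > 0
  have hL0 : 0 < L := by
    by_contra h
    push_neg at h
    have h2 : 1 / (2*L) ≤ 0 := by
      apply div_nonpos_of_nonneg_of_nonpos <;> linarith
    linarith
  have hμ0 : μ ≠ 0 := by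
    intro h
    rw [h, norm_zero] at hgt
    linarith
  have hα0 : (α:ℂ) ≠ 0 := Complex.ofReal_ne_zero.2 hα.ne'
  set K := (Hmat f pstar).map Complex.ofReal with hK
  -- determinant equation from spectrum membership
  have hdet0 : ((μ • (1 : Matrix ((Fin n ⊕ Fin m) ⊕ (Fin n ⊕ Fin m)) _ ℂ))
      - (Jogda f α pstar).map Complex.ofReal).det = 0 := by
    rw [specC, spectrum.mem_iff] at hμ
    by_contra hne
    apply hμ
    rw [Algebra.algebraMap_eq_smul_one, Matrix.isUnit_iff_isUnit_det]
    exact isUnit_iff_ne_zero.2 hne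
  -- block form
  have hblock : (μ • (1 : Matrix ((Fin n ⊕ Fin m) ⊕ (Fin n ⊕ Fin m)) _ ℂ))
      - (Jogda f α pstar).map Complex.ofReal
      = Matrix.fromBlocks ((μ - 1) • 1 - ((2*α : ℝ) : ℂ) • K) (((α : ℝ) : ℂ) • K)
          (-1) (μ • 1) := by
    ext i j
    rcases i with i | i <;> rcases j with j | j <;>
      simp [Jogda, Matrix.fromBlocks, Matrix.map_apply, Matrix.one_apply, Matrix.sub_apply,
        Matrix.smul_apply, Matrix.add_apply, Matrix.neg_apply, hK, smul_eq_mul,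
        Complex.ofReal_add, Complex.ofReal_mul, apply_ite, Complex.ofReal_one] <;>
      split_ifs <;> simp_all <;> ring
  haveI hIμ : Invertible (μ • (1 : Matrix (Fin n ⊕ Fin m) (Fin n ⊕ Fin m) ℂ)) :=
    ⟨μ⁻¹ • 1, by simp [smul_smul, inv_mul_cancel₀ hμ0, mul_inv_cancel₀ hμ0], by simp [smul_smul, inv_mul_cancel₀ hμ0, mul_inv_cancel₀ hμ0]⟩
  have hinv : ⅟(μ • (1 : Matrix (Fin n ⊕ Fin m) (Fin n ⊕ Fin m) ℂ)) = μ⁻¹ • 1 :=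
    invOf_eq_right_inv (by simp [smul_smul, inv_mul_cancel₀ hμ0, mul_inv_cancel₀ hμ0])
  rw [hblock, Matrix.det_fromBlocks₂₂, hinv] at hdet0
  -- simplify the Schur complement
  set β := 2*(α:ℂ) - (α:ℂ) * μ⁻¹ with hβ
  have hβ0 : β ≠ 0 := by
    intro h
    rw [hβ] at h
    have h21 : (2:ℂ)*μ - 1 = 0 := by
      have hm := mul_eq_zero_of_left h μ
      have hinvμ : μ⁻¹ * μ = 1 := inv_mul_cancel₀ hμ0
      have h2 : (α:ℂ) * (2*μ - 1) = 0 := by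
        linear_combination hm + (α:ℂ) * hinvμ
      rcases mul_eq_zero.1 h2 with h1 | h1
      · exact absurd h1 hα0
      · exact h1
    have : μ = 1/2 := by linear_combination h21/2
    rw [this] at hgt
    norm_num at hgt
  set lam := (μ - 1) * β⁻¹ with hlam
  have hβlam : β * lam = μ - 1 := by
    rw [hlam, mul_comm, inv_mul_cancel_right₀ hβ0]
  clear_value lam β
  have hprod : (((α : ℝ) : ℂ) • K) * (μ⁻¹ • 1) * (-1)
      = -(((α:ℂ) * μ⁻¹) • K) := by
    rw [Matrix.mul_smul, Matrix.mul_one, Matrix.mul_neg, Matrix.mul_one, smul_smul]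
    rw [mul_comm (μ⁻¹) ((α:ℂ))]
  have hschur : ((μ - 1) • 1 - ((2*α : ℝ) : ℂ) • K)
      - (((α : ℝ) : ℂ) • K) * (μ⁻¹ • 1) * (-1) = β • (lam • 1 - K) := by
    rw [hprod, sub_neg_eq_add]
    ext i j
    simp only [Matrix.sub_apply, Matrix.smul_apply, Matrix.add_apply, Matrix.one_apply,
      smul_eq_mul, Complex.ofReal_mul, Complex.ofReal_ofNat]
    split_ifs with hij
    · linear_combination -hβlam + (K i j) * hβ
    · linear_combination (K i j) * hβ
  rw [hschur] at hdet0
  have hdet1 : (lam • (1 : Matrix (Fin n ⊕ Fin m) (Fin n ⊕ Fin m) ℂ) - K).det = 0 := by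
    rw [Matrix.det_smul, Matrix.det_smul, Matrix.det_one, mul_one] at hdet0
    rcases mul_eq_zero.1 hdet0 with h | h
    · exact absurd h (pow_ne_zero _ hμ0)
    rcases mul_eq_zero.1 h with h' | h'
    · exact absurd h' (pow_ne_zero _ hβ0)
    · exact h'
  -- GDA spectrum membership
  have hJdet : ((1 + (α:ℂ)*lam) • (1 : Matrix (Fin n ⊕ Fin m) (Fin n ⊕ Fin m) ℂ)
      - (Jgda f α pstar).map Complex.ofReal) = (α:ℂ) • (lam • 1 - K) := by
    ext i j
    simp [Jgda, Matrix.map_apply, Matrix.one_apply, Matrix.sub_apply, Matrix.add_apply,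
      Matrix.smul_apply, hK, smul_eq_mul, Complex.ofReal_add, Complex.ofReal_mul,
      Complex.ofReal_one, apply_ite]
    split_ifs <;> ring
  have hJmem : (1 + (α:ℂ)*lam) ∈ specC (Jgda f α pstar) := by
    rw [specC, spectrum.mem_iff, Algebra.algebraMap_eq_smul_one, Matrix.isUnit_iff_isUnit_det,
      isUnit_iff_ne_zero]
    intro hne
    exact hne (by rw [hJdet, Matrix.det_smul, hdet1, mul_zero])
  have hstab := hstable _ hJmem
  -- eigenvector for lam
  obtain ⟨v, hv0, hveq⟩ := (Matrix.exists_mulVec_eq_zero_iff).2 hdet1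
  have hKv : K *ᵥ v = lam • v := by
    have h1 : (lam • (1 : Matrix (Fin n ⊕ Fin m) (Fin n ⊕ Fin m) ℂ)) *ᵥ v = K *ᵥ v := by
      rwa [Matrix.sub_mulVec, sub_eq_zero] at hveq
    rw [← h1, Matrix.smul_mulVec, Matrix.one_mulVec]
  have hlamL : ‖lam‖ ≤ L := eig_bound f L hL0.le hf hL pstar lam v hv0 hKv
  -- final complex inequality
  have hcbound : ‖(α:ℂ) * lam‖ < 1/2 := by
    rw [norm_mul, Complex.norm_real, Real.norm_eq_abs]
    have hαL : α * L < 1/2 := by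
      have h2L : 0 < 2*L := by linarith
      have := (lt_div_iff₀ h2L).1 hα'
      linarith
    calc |α| * ‖lam‖ = α * ‖lam‖ := by rw [abs_of_pos hα]
      _ ≤ α * L := mul_le_mul_of_nonneg_left hlamL hα.le
      _ < 1/2 := hαL
  have heqc : ((α:ℂ)*lam) * (2*μ - 1) = μ^2 - μ := by
    have hβμ : β * μ = (α:ℂ) * (2*μ - 1) := by
      rw [hβ]
      have hinvμ : μ⁻¹ * μ = 1 := inv_mul_cancel₀ hμ0
      linear_combination -(α:ℂ) * hinvμ
    have h2 : ((α:ℂ)*lam) * (2*μ - 1) = lam * (β * μ) := by rw [hβμ]; ring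
    rw [h2, hlam]
    have hinvβ : β⁻¹ * β = 1 := inv_mul_cancel₀ hβ0
    linear_combination (μ - 1) * μ * hinvβ
  exact key_complex hgt hcbound hstab heqc
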